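/- arXiv:1512.07087 — 5 statements merged into one kernel-verified Lean document; each statement's English description precedes it below -/
import Mathlib

section
/- Let w(x) = c₀ + c₁|x| with c₀, c₁ ≥ 0 and let Γ̃(x) = ιx²/2 with ι > 0. Then the concave envelope of w − Γ̃ equals (w − Γ̃)(x₀) on [−x₀, x₀] and equals w − Γ̃ outside [−x₀, x₀], where x₀ := c₁/ι. -/
/-- `e` is the concave envelope of `h`: the smallest concave function above `h`. -/
def IsConcaveEnvelope (h e : ℝ → ℝ) : Prop :=
  ConcaveOn ℝ Set.univ e ∧ (∀ x, h x ≤ e x) ∧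
    ∀ u : ℝ → ℝ, ConcaveOn ℝ Set.univ u → (∀ x, h x ≤ u x) → ∀ x, e x ≤ u x

theorem stmt_0 (c₀ c₁ ι : ℝ) (hc₀ : 0 ≤ c₀) (hc₁ : 0 ≤ c₁) (hι : 0 < ι)
    (e : ℝ → ℝ)
    (he : IsConcaveEnvelope (fun x => (c₀ + c₁ * |x|) - ι * x ^ 2 / 2) e) :
    (∀ x, |x| ≤ c₁ / ι →
      e x = (c₀ + c₁ * |c₁ / ι|) - ι * (c₁ / ι) ^ 2 / 2) ∧
    (∀ x, c₁ / ι ≤ |x| →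
      e x = (c₀ + c₁ * |x|) - ι * x ^ 2 / 2) := by
  obtain ⟨heC, heh, hemin⟩ := he
  set x₀ : ℝ := c₁ / ι with hx₀def
  have hx₀ : 0 ≤ x₀ := div_nonneg hc₁ hι.le
  have hc₁x₀ : c₁ = ι * x₀ := by rw [hx₀def]; field_simp [hι.ne']
  set K : ℝ := c₀ + c₁ * x₀ - ι * x₀ ^ 2 / 2 with hKdef
  set g : ℝ → ℝ := fun x => max (|x| - x₀) 0 ^ 2 with hgdef
  set E : ℝ → ℝ := fun x => K - ι / 2 * g x with hEdef
  clear_value x₀ K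
  -- key convexity inequality for t ↦ max t 0 ^ 2
  have hφ : ∀ x y a b : ℝ, 0 ≤ a → 0 ≤ b → a + b = 1 →
      max (a * x + b * y) 0 ^ 2 ≤ a * max x 0 ^ 2 + b * max y 0 ^ 2 := by
    intro x y a b ha hb hab
    have hmx : (0:ℝ) ≤ max x 0 := le_max_right _ _
    have hmy : (0:ℝ) ≤ max y 0 := le_max_right _ _
    have h1 : max (a * x + b * y) 0 ≤ a * max x 0 + b * max y 0 := by
      apply max_le
      · exact add_le_add (mul_le_mul_of_nonneg_left (le_max_left _ _) ha)
          (mul_le_mul_of_nonneg_left (le_max_left _ _) hb)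
      · positivity
    have h2 : max (a * x + b * y) 0 ^ 2 ≤ (a * max x 0 + b * max y 0) ^ 2 :=
      pow_le_pow_left₀ (le_max_right _ _) h1 2
    nlinarith [mul_nonneg (mul_nonneg ha hb) (sq_nonneg (max x 0 - max y 0))]
  have hgconv : ConvexOn ℝ Set.univ g := by
    refine ⟨convex_univ, ?_⟩
    intro x _ y _ a b ha hb hab
    simp only [smul_eq_mul, hgdef]
    have habs : |a * x + b * y| ≤ a * |x| + b * |y| := by
      calc |a * x + b * y| ≤ |a * x| + |b * y| := abs_add_le _ _
        _ = a * |x| + b * |y| := by rw [abs_mul, abs_mul, abs_of_nonneg ha, abs_of_nonneg hb]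
    calc max (|a * x + b * y| - x₀) 0 ^ 2
        ≤ max (a * (|x| - x₀) + b * (|y| - x₀)) 0 ^ 2 := by
          have hm : max (|a * x + b * y| - x₀) 0 ≤
              max (a * (|x| - x₀) + b * (|y| - x₀)) 0 := by
            apply max_le_max _ le_rfl
            have : a * (|x| - x₀) + b * (|y| - x₀) = a * |x| + b * |y| - x₀ := by
              linear_combination (-x₀) * hab
            rw [this]; linarith
          exact pow_le_pow_left₀ (le_max_right _ _) hm 2
      _ ≤ a * max (|x| - x₀) 0 ^ 2 + b * max (|y| - x₀) 0 ^ 2 :=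
          hφ _ _ _ _ ha hb hab
  have hEconc : ConcaveOn ℝ Set.univ E := by
    refine ⟨convex_univ, ?_⟩
    intro x _ y _ a b ha hb hab
    have hg2 := hgconv.2 (Set.mem_univ x) (Set.mem_univ y) ha hb hab
    simp only [smul_eq_mul] at hg2 ⊢
    simp only [hEdef]
    have habK : a * K + b * K = K := by linear_combination K * hab
    nlinarith [mul_le_mul_of_nonneg_left hg2 (le_of_lt (half_pos hι)), habK]
  -- h ≤ E
  have hhE : ∀ x, (c₀ + c₁ * |x|) - ι * x ^ 2 / 2 ≤ E x := by
    intro x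
    simp only [hEdef, hgdef, hKdef]
    rcases le_total (|x|) x₀ with hx | hx
    · rw [max_eq_right (by linarith)]
      nlinarith [sq_nonneg (|x| - x₀), sq_abs x]
    · rw [max_eq_left (by linarith)]
      nlinarith [sq_abs x]
  have heE : ∀ x, e x ≤ E x := hemin E hEconc hhE
  -- K ≤ e x on [-x₀, x₀]
  have hKe : ∀ x, |x| ≤ x₀ → K ≤ e x := by
    intro x hx
    have hKneg : K ≤ e (-x₀) := by
      have := heh (-x₀)
      simp only [abs_neg, abs_of_nonneg hx₀, neg_sq] at this
      rw [hKdef]; linarith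
    have hKpos : K ≤ e x₀ := by
      have := heh x₀
      simp only [abs_of_nonneg hx₀] at this
      rw [hKdef]; linarith
    rcases eq_or_lt_of_le hx₀ with h0 | h0
    · have hx0 : x = 0 := by
        have : |x| ≤ 0 := by rw [h0]; exact hx
        exact abs_eq_zero.mp (le_antisymm this (abs_nonneg x))
      subst hx0
      have h1 := heh 0
      simp only [abs_zero, mul_zero, add_zero] at h1
      rw [hKdef, ← h0]
      norm_num at h1 ⊢
      linarith
    · set a : ℝ := (x₀ - x) / (2 * x₀) with hadef
      set b : ℝ := (x₀ + x) / (2 * x₀) with hbdef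
      have hxle : -x₀ ≤ x ∧ x ≤ x₀ := abs_le.mp hx
      have ha : 0 ≤ a := div_nonneg (by linarith [hxle.2]) (by linarith)
      have hb : 0 ≤ b := div_nonneg (by linarith [hxle.1]) (by linarith)
      have hab : a + b = 1 := by rw [hadef, hbdef]; field_simp; ring
      have hcomb : a * (-x₀) + b * x₀ = x := by
        rw [hadef, hbdef]; field_simp; ring
      have hcc := heC.2 (Set.mem_univ (-x₀)) (Set.mem_univ x₀) ha hb hab
      simp only [smul_eq_mul, hcomb] at hcc
      have habK : a * K + b * K = K := by linear_combination K * hab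
      nlinarith [mul_le_mul_of_nonneg_left hKneg ha, mul_le_mul_of_nonneg_left hKpos hb]
  constructor
  · intro x hx
    have h1 : e x ≤ K := by
      have := heE x
      simp only [hEdef, hgdef, max_eq_right (by linarith : |x| - x₀ ≤ 0)] at this
      simpa using this
    have h2 : K ≤ e x := hKe x hx
    have h3 : e x = K := le_antisymm h1 h2
    rw [h3, hKdef, abs_of_nonneg hx₀]
  · intro x hx
    have h1 : e x ≤ (c₀ + c₁ * |x|) - ι * x ^ 2 / 2 := by
      have := heE x
      simp only [hEdef, hgdef, hKdef,
        max_eq_left (by linarith : 0 ≤ |x| - x₀)] at this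
      nlinarith [this, sq_abs x]
    exact le_antisymm h1 (heh x)
end

section
/- Let g : ℝ → ℝ satisfy |g(x)| ≤ c₀ + c₁|x| for all x, and let Γ̃(x) = ιx²/2 with ι > 0. Then the function ĝ := (g − Γ̃)^conc + Γ̃ (where ^conc denotes the concave envelope) satisfies a linear growth bound: there exist constants C₀, C₁ ≥ 0 such that |ĝ(x)| ≤ C₀ + C₁|x| for all x. -/
theorem stmt_1 (g : ℝ → ℝ) (c₀ c₁ ι : ℝ) (hc₀ : 0 ≤ c₀) (hc₁ : 0 ≤ c₁) (hι : 0 < ι)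
    (hg : ∀ x, |g x| ≤ c₀ + c₁ * |x|)
    (e : ℝ → ℝ)
    (he : IsConcaveEnvelope (fun x => g x - ι * x ^ 2 / 2) e) :
    ∃ C₀ C₁ : ℝ, 0 ≤ C₀ ∧ 0 ≤ C₁ ∧
      ∀ x, |e x + ι * x ^ 2 / 2| ≤ C₀ + C₁ * |x| := by
  obtain ⟨hconc, hle, hmin⟩ := he
  refine ⟨c₀ + c₁ ^ 2 / (2 * ι), c₁, by positivity, hc₁, fun x => ?_⟩
  obtain ⟨β, hβ⟩ : ∃ β : ℝ, β = -(ι * x) := ⟨_, rfl⟩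
  obtain ⟨α, hα⟩ : ∃ α : ℝ, α = c₀ + (c₁ + ι * |x|) ^ 2 / (2 * ι) := ⟨_, rfl⟩
  have hα2 : (2 * ι) * α = 2 * ι * c₀ + (c₁ + ι * |x|) ^ 2 := by
    rw [hα]; field_simp
  have hu : ConcaveOn ℝ Set.univ (fun t => α + β * t) := by
    refine ⟨convex_univ, fun p _ q _ a b ha hb hab => ?_⟩
    simp only [smul_eq_mul]
    have heq : a * (α + β * p) + b * (α + β * q) = α + β * (a * p + b * q) := by
      linear_combination α * hab
    exact le_of_eq heq
  have hge : ∀ t, (fun x => g x - ι * x ^ 2 / 2) t ≤ α + β * t := by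
    intro t
    simp only
    have h2 : |β| = ι * |x| := by
      rw [hβ, abs_neg, abs_mul, abs_of_pos hι]
    have h3 : -(ι * |x|) * |t| ≤ β * t := by
      have h := neg_abs_le (β * t)
      rw [abs_mul, h2] at h
      linarith
    have h3' : (2 * ι) * (-(ι * |x|) * |t|) ≤ (2 * ι) * (β * t) :=
      mul_le_mul_of_nonneg_left h3 (by positivity)
    have h4 : g t ≤ c₀ + c₁ * |t| := (abs_le.mp (hg t)).2
    have h4' : (2 * ι) * g t ≤ (2 * ι) * (c₀ + c₁ * |t|) :=
      mul_le_mul_of_nonneg_left h4 (by positivity)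
    have key : 0 ≤ ι ^ 2 * t ^ 2 - 2 * ι * |t| * (c₁ + ι * |x|) + (c₁ + ι * |x|) ^ 2 := by
      nlinarith [sq_nonneg (ι * |t| - (c₁ + ι * |x|)), sq_abs t]
    have main : (2 * ι) * (g t - ι * t ^ 2 / 2) ≤ (2 * ι) * (α + β * t) := by
      nlinarith [key, h3', h4', hα2]
    exact le_of_mul_le_mul_left main (by positivity)
  have hupper : e x ≤ α + β * x := hmin _ hu hge x
  have hlower : -(c₀ + c₁ * |x|) - ι * x ^ 2 / 2 ≤ e x := by
    have h1 := hle x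
    have h2 := (abs_le.mp (hg x)).1
    simp only at h1
    linarith
  have hx2 : |x| ^ 2 = x ^ 2 := sq_abs x
  have halg : α + β * x + ι * x ^ 2 / 2 = c₀ + c₁ ^ 2 / (2 * ι) + c₁ * |x| := by
    rw [hα, hβ]
    field_simp
    linear_combination (ι ^ 2) * hx2
  have hpos : 0 ≤ c₁ ^ 2 / (2 * ι) := by positivity
  rw [abs_le]
  constructor <;> linarith
end

section
/- Let σ, f be bounded measurable with inf σ > 0, inf f > 0, and let k ≥ 0, γ̄ bounded with ι ≤ γ̄ ≤ 1/f − ι for ι > 0. Define γ_Y^a(x) := a/(σ(x) + f(x)a). If a ∈ ℝ and x ∈ ℝ satisfy −k ≤ γ_Y^a(x) ≤ γ̄(x), then necessarily σ(x) + f(x)a > 0, and there exists ε > 0 (depending only on the bounds on σ, f, γ̄, ι, k) such that ε/(1 + kε⁻¹) ≤ σ(x) + f(x)a ≤ ε⁻¹ + ε⁻² and |a| ≤ ε⁻¹. -/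
lemma key13 (s F a g ι k mσ mf Cσ Cf : ℝ) (hι : 0 < ι) (hk : 0 ≤ k)
    (hs1 : mσ ≤ s) (hs2 : s ≤ Cσ) (hF1 : mf ≤ F) (hF2 : F ≤ Cf)
    (hmσ : 0 < mσ) (hmf : 0 < mf)
    (hgk : -k ≤ g) (hg : g ≤ 1 / F - ι)
    (heq : g * (s + F * a) = a) :
    0 < s + F * a ∧ mσ / (1 + k * Cf) ≤ s + F * a ∧
      s + F * a ≤ Cσ / (ι * mf) ∧ |a| ≤ (Cσ / (ι * mf) + Cσ) / mf := by
  have hF0 : 0 < F := lt_of_lt_of_le hmf hF1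
  have hs0 : 0 < s := lt_of_lt_of_le hmσ hs1
  have hDs : (s + F * a) * (1 - F * g) = s := by linear_combination (-F) * heq
  have hg' : F * g ≤ 1 - ι * F := by
    have h1 : F * g ≤ F * (1 / F - ι) := mul_le_mul_of_nonneg_left hg hF0.le
    have h2 : F * (1 / F) = 1 := mul_one_div_cancel hF0.ne'
    nlinarith
  have hpos : 0 < 1 - F * g := by nlinarith
  have hD : 0 < s + F * a := by
    by_contra h
    push_neg at h
    nlinarith
  have hkCf : 0 ≤ k * Cf := mul_nonneg hk (by linarith)
  have hlow : mσ / (1 + k * Cf) ≤ s + F * a := by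
    rw [div_le_iff₀ (by linarith)]
    nlinarith [mul_nonneg hD.le (mul_nonneg hF0.le (by linarith : (0:ℝ) ≤ k + g)),
      mul_nonneg (mul_nonneg hD.le hk) (by linarith : (0:ℝ) ≤ Cf - F)]
  have hup : s + F * a ≤ Cσ / (ι * mf) := by
    rw [le_div_iff₀ (by positivity)]
    nlinarith [mul_nonneg hD.le (by nlinarith : (0:ℝ) ≤ 1 - F * g - ι * F),
      mul_nonneg (mul_nonneg hD.le hι.le) (by linarith : (0:ℝ) ≤ F - mf)]
  refine ⟨hD, hlow, hup, ?_⟩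
  have hFa : F * a = (s + F * a) - s := by ring
  have hCσ : 0 < Cσ := lt_of_lt_of_le hs0 hs2
  have hM : 0 ≤ (Cσ / (ι * mf) + Cσ) / mf :=
    div_nonneg (add_nonneg (div_nonneg hCσ.le (by positivity)) hCσ.le) hmf.le
  rw [abs_le]
  constructor
  · rcases le_or_gt 0 a with h | h
    · linarith
    · rw [neg_le, le_div_iff₀ hmf]
      nlinarith [mul_le_mul_of_nonneg_left hF1 (by linarith : (0:ℝ) ≤ -a)]
  · rcases le_or_gt a 0 with h | h
    · linarith
    · rw [le_div_iff₀ hmf]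
      nlinarith [mul_le_mul_of_nonneg_left hF1 h.le]

theorem stmt_13 (σ f γ : ℝ → ℝ) (ι k : ℝ) (hι : 0 < ι) (hk : 0 ≤ k)
    (hσm : Measurable σ) (hfm : Measurable f)
    (Cσ Cf : ℝ) (hσb : ∀ x, |σ x| ≤ Cσ) (hfb : ∀ x, |f x| ≤ Cf)
    (mσ mf : ℝ) (hmσ : 0 < mσ) (hσi : ∀ x, mσ ≤ σ x)
    (hmf : 0 < mf) (hfi : ∀ x, mf ≤ f x)
    (Cγ : ℝ) (hγb : ∀ x, |γ x| ≤ Cγ)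
    (hγ : ∀ x, ι ≤ γ x ∧ γ x ≤ 1 / f x - ι) :
    (∀ a x : ℝ, σ x + f x * a ≠ 0 →
        -k ≤ a / (σ x + f x * a) → a / (σ x + f x * a) ≤ γ x →
        0 < σ x + f x * a) ∧
    ∃ ε > (0 : ℝ), ∀ a x : ℝ, σ x + f x * a ≠ 0 →
        -k ≤ a / (σ x + f x * a) → a / (σ x + f x * a) ≤ γ x →
        ε / (1 + k * ε⁻¹) ≤ σ x + f x * a ∧
        σ x + f x * a ≤ ε⁻¹ + ε⁻¹ ^ 2 ∧ |a| ≤ ε⁻¹ := by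
  have hkey : ∀ a x : ℝ, σ x + f x * a ≠ 0 →
      -k ≤ a / (σ x + f x * a) → a / (σ x + f x * a) ≤ γ x →
      0 < σ x + f x * a ∧ mσ / (1 + k * Cf) ≤ σ x + f x * a ∧
        σ x + f x * a ≤ Cσ / (ι * mf) ∧ |a| ≤ (Cσ / (ι * mf) + Cσ) / mf := by
    intro a x hne h1 h2
    exact key13 (σ x) (f x) a (a / (σ x + f x * a)) ι k mσ mf Cσ Cf hι hk
      (hσi x) ((le_abs_self _).trans (hσb x)) (hfi x) ((le_abs_self _).trans (hfb x))
      hmσ hmf h1 (h2.trans (hγ x).2) (div_mul_cancel₀ a hne)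
  refine ⟨fun a x hne h1 h2 => (hkey a x hne h1 h2).1, ?_⟩
  have hCσ : 0 < Cσ := lt_of_lt_of_le hmσ ((hσi 0).trans ((le_abs_self _).trans (hσb 0)))
  have hCf : 0 < Cf := lt_of_lt_of_le hmf ((hfi 0).trans ((le_abs_self _).trans (hfb 0)))
  set M : ℝ := max (Cσ / (ι * mf)) ((Cσ / (ι * mf) + Cσ) / mf) with hM
  have hM0 : 0 ≤ M := le_trans (by positivity) (le_max_left _ _)
  set ε : ℝ := min (mσ / (1 + k * Cf)) (M + 1)⁻¹ with hε
  have hε0 : 0 < ε := lt_min (by positivity) (by positivity)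
  have hεinv : M + 1 ≤ ε⁻¹ := by
    have h1 : ε ≤ (M + 1)⁻¹ := min_le_right _ _
    calc M + 1 = ((M + 1)⁻¹)⁻¹ := (inv_inv _).symm
      _ ≤ ε⁻¹ := by
        apply inv_anti₀ hε0 h1
  refine ⟨ε, hε0, fun a x hne h1 h2 => ?_⟩
  obtain ⟨hD, hlow, hup, ha⟩ := hkey a x hne h1 h2
  refine ⟨?_, ?_, ?_⟩
  · have h3 : ε / (1 + k * ε⁻¹) ≤ ε := by
      apply div_le_self hε0.le
      have : 0 ≤ k * ε⁻¹ := mul_nonneg hk (by positivity)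
      linarith
    exact h3.trans ((min_le_left _ _).trans hlow)
  · have : Cσ / (ι * mf) ≤ M := le_max_left _ _
    have h4 : 0 ≤ ε⁻¹ ^ 2 := sq_nonneg _
    linarith
  · have : (Cσ / (ι * mf) + Cσ) / mf ≤ M := le_max_right _ _
    linarith
end

section
/- (Face-lift for the call spread) Let g(x) = (x − K₁)⁺ − (x − K₂)⁺ with K₁ < K₂, γ̄ > 0 constant, and assume K₁ + 1/(2γ̄) ≤ K₂. Set x⁻ = K₁ − 1/(2γ̄), x⁺ = K₁ + 1/(2γ̄). Then the function ĝ defined by ĝ(x) = 0 for x < x⁻, ĝ(x) = (γ̄/2)(x − x⁻)² for x⁻ ≤ x < x⁺, ĝ(x) = x − K₁ for x⁺ ≤ x < K₂, and ĝ(x) = K₂ − K₁ for x ≥ K₂, is the smallest function u ≥ g such that u(x) − γ̄x²/2 is concave. -/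
open Set Filter

lemma hasDerivAt_sq_max (a x : ℝ) :
    HasDerivAt (fun y => max (y - a) 0 ^ 2) (2 * max (x - a) 0) x := by
  rcases lt_trichotomy x a with h | rfl | h
  · have hev : (fun y : ℝ => max (y - a) 0 ^ 2) =ᶠ[nhds x] fun _ => (0:ℝ) := by
      filter_upwards [Iio_mem_nhds h] with y hy
      rw [max_eq_right (by simpa using le_of_lt hy : y - a ≤ 0)]
      norm_num
    have := (hasDerivAt_const x (0:ℝ)).congr_of_eventuallyEq hev
    simpa [max_eq_right (by linarith : x - a ≤ 0)] using this
  · have hbound : ∀ y, ‖slope (fun y : ℝ => max (y - x) 0 ^ 2) x y‖ ≤ ‖y - x‖ := by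
      intro y
      rcases eq_or_ne y x with rfl | hy
      · simp [slope]
      · rw [slope_def_field]
        have h0 : (0:ℝ) ≤ max (y - x) 0 ^ 2 := by positivity
        have h1 : max (y - x) 0 ^ 2 ≤ (y - x) ^ 2 := by
          rcases le_total (y - x) 0 with h | h
          · rw [max_eq_right h]; simpa using sq_nonneg (y - x)
          · rw [max_eq_left h]
        have hya : (0:ℝ) < |y - x| := abs_pos.2 (sub_ne_zero.2 hy)
        rw [Real.norm_eq_abs, Real.norm_eq_abs, abs_div,
          div_le_iff₀ hya]
        have : |max (y - x) 0 ^ 2 - max (x - x) 0 ^ 2| = max (y - x) 0 ^ 2 := by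
          simp [abs_of_nonneg h0]
        rw [this]
        calc max (y - x) 0 ^ 2 ≤ (y - x) ^ 2 := h1
          _ = |y - x| * |y - x| := by rw [abs_mul_abs_self]; ring
    have htend : Tendsto (fun y : ℝ => ‖y - x‖) (nhdsWithin x {x}ᶜ) (nhds 0) := by
      have : Tendsto (fun y : ℝ => ‖y - x‖) (nhds x) (nhds 0) := by
        simpa using tendsto_norm_sub_self x
      exact this.mono_left nhdsWithin_le_nhds
    have : HasDerivAt (fun y : ℝ => max (y - x) 0 ^ 2) 0 x := by
      rw [hasDerivAt_iff_tendsto_slope]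
      exact squeeze_zero_norm hbound htend
    simpa using this
  · have hev : (fun y : ℝ => max (y - a) 0 ^ 2) =ᶠ[nhds x] fun y => (y - a) ^ 2 := by
      filter_upwards [Ioi_mem_nhds h] with y hy
      rw [max_eq_left (by simpa using le_of_lt hy : 0 ≤ y - a)]
    have hd : HasDerivAt (fun y : ℝ => (y - a) ^ 2) (2 * (x - a)) x := by
      have := ((hasDerivAt_id x).sub_const a).pow 2
      exact (by simpa using this : HasDerivAt ((fun y => y - a) ^ 2) (2 * (x - a)) x)
    have := hd.congr_of_eventuallyEq hev
    rwa [max_eq_left (by linarith : 0 ≤ x - a)]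

set_option maxHeartbeats 1000000 in
theorem stmt_16 (K₁ K₂ γ : ℝ) (hK : K₁ < K₂) (hγ : 0 < γ)
    (hgap : K₁ + 1 / (2 * γ) ≤ K₂)
    (g : ℝ → ℝ) (hg : ∀ x, g x = max (x - K₁) 0 - max (x - K₂) 0)
    (ghat : ℝ → ℝ)
    (hghat : ∀ x, ghat x =
      if x < K₁ - 1 / (2 * γ) then 0
      else if x < K₁ + 1 / (2 * γ) then γ / 2 * (x - (K₁ - 1 / (2 * γ))) ^ 2
      else if x < K₂ then x - K₁
      else K₂ - K₁) :
    (∀ x, g x ≤ ghat x) ∧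
    ConcaveOn ℝ Set.univ (fun x => ghat x - γ * x ^ 2 / 2) ∧
    ∀ u : ℝ → ℝ, (∀ x, g x ≤ u x) →
      ConcaveOn ℝ Set.univ (fun x => u x - γ * x ^ 2 / 2) →
      ∀ x, ghat x ≤ u x := by
  set ε := 1 / (2 * γ) with hεdef
  have hε : 2 * γ * ε = 1 := by
    rw [hεdef]; field_simp
  have hεpos : 0 < ε := by rw [hεdef]; positivity
  have hgap' : ε ≤ K₂ - K₁ := by linarith
  refine ⟨?_, ?_, ?_⟩
  · -- g ≤ ghat
    intro x
    rw [hg, hghat]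
    split_ifs with h1 h2 h3
    · rw [max_eq_right (by linarith : x - K₁ ≤ 0),
        max_eq_right (by linarith : x - K₂ ≤ 0)]
      norm_num
    · push_neg at h1
      rw [max_eq_right (by linarith : x - K₂ ≤ 0)]
      rcases le_total (x - K₁) 0 with h | h
      · rw [max_eq_right h]
        nlinarith [sq_nonneg (x - (K₁ - ε))]
      · rw [max_eq_left h]
        nlinarith [sq_nonneg (2 * γ * (x - K₁) - 1), mul_pos hγ hγ, sq_nonneg (x - K₁ + ε)]
    · push_neg at h1 h2
      rw [max_eq_left (by linarith : 0 ≤ x - K₁),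
        max_eq_right (by linarith : x - K₂ ≤ 0)]
      linarith
    · push_neg at h1 h2 h3
      rw [max_eq_left (by linarith : 0 ≤ x - K₁),
        max_eq_left (by linarith : 0 ≤ x - K₂)]
      linarith
  · -- concavity
    set Qf : ℝ → ℝ := fun x =>
      γ / 2 * max (x - (K₁ - ε)) 0 ^ 2 - γ / 2 * max (x - (K₁ + ε)) 0 ^ 2 - γ * x ^ 2 / 2
      with hQf
    set rf : ℝ → ℝ := fun x => K₂ - K₁ - γ * x ^ 2 / 2 with hrf
    have hQd : ∀ x, HasDerivAt Qf
        (γ * max (x - (K₁ - ε)) 0 - γ * max (x - (K₁ + ε)) 0 - γ * x) x := by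
      intro x
      have h1 := (hasDerivAt_sq_max (K₁ - ε) x).const_mul (γ / 2)
      have h2 := (hasDerivAt_sq_max (K₁ + ε) x).const_mul (γ / 2)
      have h3 : HasDerivAt (fun y : ℝ => γ * y ^ 2 / 2) (γ * x) x := by
        have := ((hasDerivAt_pow 2 x).const_mul γ).div_const 2
        refine this.congr_deriv ?_
        push_cast
        ring
      have := (h1.sub h2).sub h3
      refine this.congr_deriv ?_
      ring
    have hrd : ∀ x, HasDerivAt rf (-(γ * x)) x := by
      intro x
      have h3 : HasDerivAt (fun y : ℝ => γ * y ^ 2 / 2) (γ * x) x := by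
        have := ((hasDerivAt_pow 2 x).const_mul γ).div_const 2
        refine this.congr_deriv ?_
        push_cast
        ring
      exact ((hasDerivAt_const x (K₂ - K₁)).sub h3).congr_deriv (by ring)
    have hQc : ConcaveOn ℝ Set.univ Qf := by
      apply Antitone.concaveOn_univ_of_deriv (fun x => (hQd x).differentiableAt)
      have hd : deriv Qf = fun x =>
          γ * max (x - (K₁ - ε)) 0 - γ * max (x - (K₁ + ε)) 0 - γ * x :=
        funext fun x => (hQd x).deriv
      rw [hd]
      intro x y hxy
      dsimp only
      have hb1 : max (y - (K₁ - ε)) 0 ≤ max (x - (K₁ - ε)) 0 + (y - x) :=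
        max_le (by linarith [le_max_left (x - (K₁ - ε)) (0:ℝ)])
          (by linarith [le_max_right (x - (K₁ - ε)) (0:ℝ)])
      have hb2 : max (x - (K₁ + ε)) 0 ≤ max (y - (K₁ + ε)) 0 :=
        max_le_max (by linarith) le_rfl
      nlinarith [mul_le_mul_of_nonneg_left hb1 hγ.le, mul_le_mul_of_nonneg_left hb2 hγ.le]
    have hrc : ConcaveOn ℝ Set.univ rf := by
      apply Antitone.concaveOn_univ_of_deriv (fun x => (hrd x).differentiableAt)
      have hd : deriv rf = fun x => -(γ * x) := funext fun x => (hrd x).deriv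
      rw [hd]
      intro x y hxy
      dsimp only
      nlinarith
    have hrfx : ∀ x, rf x = K₂ - K₁ - γ * x ^ 2 / 2 := fun x => rfl
    have key : (fun x => ghat x - γ * x ^ 2 / 2) = Qf ⊓ rf := by
      funext x
      rw [Pi.inf_apply, hghat]
      rcases lt_or_ge x (K₁ - ε) with h1 | h1
      · have hQx : Qf x = 0 - γ * x ^ 2 / 2 := by
          rw [hQf]
          dsimp only
          rw [max_eq_right (by linarith : x - (K₁ - ε) ≤ 0),
            max_eq_right (by linarith : x - (K₁ + ε) ≤ 0)]
          ring
        rw [if_pos h1, hQx, hrfx, min_eq_left (by nlinarith)]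
      · rcases lt_or_ge x (K₁ + ε) with h2 | h2
        · have hQx : Qf x = γ / 2 * (x - (K₁ - ε)) ^ 2 - γ * x ^ 2 / 2 := by
            rw [hQf]
            dsimp only
            rw [max_eq_left (by linarith : 0 ≤ x - (K₁ - ε)),
              max_eq_right (by linarith : x - (K₁ + ε) ≤ 0)]
            ring
          have h2γεt : 2 * γ * ε * (x - (K₁ - ε)) = x - (K₁ - ε) := by
            rw [hε]; ring
          have hle : γ / 2 * (x - (K₁ - ε)) ^ 2 ≤ K₂ - K₁ := by
            nlinarith [mul_nonneg hγ.le (mul_nonneg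
              (by linarith : (0:ℝ) ≤ x - (K₁ - ε)) (by linarith : (0:ℝ) ≤ K₁ + ε - x)),
              h2γεt]
          rw [if_neg (not_lt.2 h1), if_pos h2, hQx, hrfx, min_eq_left (by linarith)]
        · have hQx : Qf x = x - K₁ - γ * x ^ 2 / 2 := by
            rw [hQf]
            dsimp only
            rw [max_eq_left (by linarith : 0 ≤ x - (K₁ - ε)),
              max_eq_left (by linarith : 0 ≤ x - (K₁ + ε))]
            linear_combination (x - K₁) * hε
          rcases lt_or_ge x K₂ with h3 | h3
          · rw [if_neg (not_lt.2 h1), if_neg (not_lt.2 h2), if_pos h3, hQx, hrfx,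
              min_eq_left (by linarith)]
          · rw [if_neg (not_lt.2 h1), if_neg (not_lt.2 h2), if_neg (not_lt.2 h3), hQx, hrfx,
              min_eq_right (by linarith)]
    rw [key]
    exact hQc.inf hrc
  · -- minimality
    intro u hu hconc x
    rw [hghat]
    split_ifs with h1 h2 h3
    · have := hu x
      rw [hg x, max_eq_right (by linarith : x - K₁ ≤ 0),
        max_eq_right (by linarith : x - K₂ ≤ 0)] at this
      linarith
    · push_neg at h1
      have ha : (0:ℝ) ≤ γ * ((K₁ + ε) - x) := by nlinarith
      have hb : (0:ℝ) ≤ γ * (x - (K₁ - ε)) := by nlinarith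
      have hab : γ * ((K₁ + ε) - x) + γ * (x - (K₁ - ε)) = 1 := by linear_combination hε
      have hcomb := hconc.2 (Set.mem_univ (K₁ - ε)) (Set.mem_univ (K₁ + ε)) ha hb hab
      simp only [smul_eq_mul] at hcomb
      have hxeq : γ * ((K₁ + ε) - x) * (K₁ - ε) + γ * (x - (K₁ - ε)) * (K₁ + ε) = x := by
        linear_combination x * hε
      rw [hxeq] at hcomb
      have huA := hu (K₁ - ε)
      rw [hg, max_eq_right (by linarith : K₁ - ε - K₁ ≤ 0),
        max_eq_right (by linarith : K₁ - ε - K₂ ≤ 0)] at huA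
      have huB := hu (K₁ + ε)
      rw [hg, max_eq_left (by linarith : 0 ≤ K₁ + ε - K₁),
        max_eq_right (by linarith : K₁ + ε - K₂ ≤ 0)] at huB
      have hid : γ * ((K₁ + ε) - x) * (0 - γ * (K₁ - ε) ^ 2 / 2)
          + γ * (x - (K₁ - ε)) * ((K₁ + ε - K₁ - 0) - γ * (K₁ + ε) ^ 2 / 2)
          = γ / 2 * (x - (K₁ - ε)) ^ 2 - γ * x ^ 2 / 2 := by
        rw [hεdef]
        field_simp
        ring
      nlinarith [hcomb, hid, mul_le_mul_of_nonneg_left huA ha,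
        mul_le_mul_of_nonneg_left huB hb]
    · push_neg at h1 h2
      have := hu x
      rw [hg x, max_eq_left (by linarith : 0 ≤ x - K₁),
        max_eq_right (by linarith : x - K₂ ≤ 0)] at this
      linarith
    · push_neg at h1 h2 h3
      have := hu x
      rw [hg x, max_eq_left (by linarith : 0 ≤ x - K₁),
        max_eq_left (by linarith : 0 ≤ x - K₂)] at this
      linarith
end

section
/- Let w, h : ℝ → ℝ with |h| ≤ w, w continuous of linear growth, and suppose Γ̄°, Γ̃ ∈ C² satisfy (Γ̄°)'' = γ̄ ≥ Γ̃'' = η pointwise with 0 < η. Then ((w − Γ̄°)^conc + Γ̄° − Γ̃)^conc + Γ̃ ≤ ((w − Γ̃)^conc + Γ̃ − Γ̃)^conc + Γ̃ = (w − Γ̃)^conc + Γ̃; i.e., the face-lift with the larger curvature bound γ̄ followed by face-lift with η is dominated by the single face-lift with η: ((w − Γ̄°)^conc + Γ̄° − Γ̃)^conc + Γ̃ ≤ (w − Γ̃)^conc + Γ̃. -/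
theorem stmt_19 (w h γ : ℝ → ℝ) (hhw : ∀ x, |h x| ≤ w x)
    (hwc : Continuous w) (c₀ c₁ : ℝ) (hw : ∀ x, |w x| ≤ c₀ + c₁ * |x|)
    (η : ℝ) (hη : 0 < η)
    (Γ Γt : ℝ → ℝ)
    (hΓ : ContDiff ℝ 2 Γ) (hΓ'' : ∀ x, deriv (deriv Γ) x = γ x)
    (hΓt : ContDiff ℝ 2 Γt) (hΓt'' : ∀ x, deriv (deriv Γt) x = η)
    (hγη : ∀ x, η ≤ γ x)
    (e₁ e₂ e₃ : ℝ → ℝ)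
    (he₁ : IsConcaveEnvelope (fun x => w x - Γ x) e₁)
    (he₂ : IsConcaveEnvelope (fun x => e₁ x + Γ x - Γt x) e₂)
    (he₃ : IsConcaveEnvelope (fun x => w x - Γt x) e₃) :
    ∀ x, e₂ x + Γt x ≤ e₃ x + Γt x := by
  obtain ⟨hc₁, hm₁, hmin₁⟩ := he₁
  obtain ⟨hc₂, hm₂, hmin₂⟩ := he₂
  obtain ⟨hc₃, hm₃, hmin₃⟩ := he₃
  have hΓd : Differentiable ℝ Γ := hΓ.differentiable (by norm_num)
  have hΓtd : Differentiable ℝ Γt := hΓt.differentiable (by norm_num)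
  have hΓd' : Differentiable ℝ (deriv Γ) :=
    (hΓ.iterate_deriv' 1 1).differentiable (by norm_num)
  have hΓtd' : Differentiable ℝ (deriv Γt) :=
    (hΓt.iterate_deriv' 1 1).differentiable (by norm_num)
  -- Γ - Γt is convex
  have hconv : ConvexOn ℝ Set.univ (fun x => Γ x - Γt x) := by
    have hd : Differentiable ℝ (fun x => Γ x - Γt x) := hΓd.sub hΓtd
    have hderiv : deriv (fun x => Γ x - Γt x) = fun x => deriv Γ x - deriv Γt x := by
      funext x; exact deriv_sub (hΓd x) (hΓtd x)
    have hd2 : Differentiable ℝ (deriv (fun x => Γ x - Γt x)) := by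
      rw [hderiv]; exact hΓd'.sub hΓtd'
    refine convexOn_univ_of_deriv2_nonneg hd hd2 fun x => ?_
    have : deriv^[2] (fun x => Γ x - Γt x) x = γ x - η := by
      simp only [Function.iterate_succ, Function.iterate_zero, Function.comp_apply, id_eq]
      rw [hderiv, deriv_fun_sub (hΓd' x) (hΓtd' x), hΓ'', hΓt'']
    rw [this]
    linarith [hγη x]
  -- e₃ - Γ + Γt is concave and dominates w - Γ, hence e₁
  have hconc : ConcaveOn ℝ Set.univ (fun x => e₃ x - Γ x + Γt x) := by
    have := hc₃.add hconv.neg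
    convert this using 2 with x
    · rfl
    simp [Pi.add_apply, Pi.neg_apply]
    ring
  have h1 : ∀ x, e₁ x ≤ e₃ x - Γ x + Γt x := by
    refine hmin₁ _ hconc fun x => ?_
    have := hm₃ x
    simp only at this ⊢
    linarith
  have h2 : ∀ x, e₂ x ≤ e₃ x := by
    refine hmin₂ _ hc₃ fun x => ?_
    have := h1 x
    simp only
    linarith
  intro x
  linarith [h2 x]
end
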